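/- At the zeros s₃,₄ of the averaged system f = (f₁, f₂, f₃) from the zero-Hopf bifurcation at the origin, the determinant of the Jacobian of f equals a₁b₁(-6c²e₁ + 3a₁ω² - 4√3·c·d₁√(c²+ω²))/(3ω⁵); in particular it is nonzero whenever a₁ ≠ 0, b₁ ≠ 0 and 3a₁ω² ≠ 2c(3ce₁ + 2√3·d₁√(c²+ω²)). -/

import Mathlib

private lemma dlin (a b x : ℝ) : deriv (fun t : ℝ => t * a + b) x = a := by
  simpa using (((hasDerivAt_id x).mul_const a).add_const b).deriv

private lemma dsq (a b x : ℝ) : deriv (fun t : ℝ => t ^ 2 * a + b) x = 2 * x * a := by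
  have h : HasDerivAt (fun t : ℝ => t ^ 2 * a + b) (2 * x * a) x := by
    have := ((hasDerivAt_pow 2 x).mul_const a).add_const b
    refine this.congr_deriv ?_
    push_cast
    norm_num
  exact h.deriv

/-- At the zeros `s₃,₄` of the averaged system from the zero-Hopf bifurcation at the
origin, the Jacobian determinant equals
`a₁b₁(-6c²e₁ + 3a₁ω² - 4√3·c·d₁√(c²+ω²))/(3ω⁵)`, nonzero whenever `a₁ ≠ 0`, `b₁ ≠ 0` and
`3a₁ω² ≠ 2c(3ce₁ + 2√3·d₁√(c²+ω²))`. -/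
theorem averaged_system_origin_jacobian_s34
    (ω c a₁ b₁ d₁ e₁ : ℝ) (hω : 0 < ω) (hc : c ≠ 0)
    (hrad : 0 ≤ b₁ * ω ^ 2 * (6 * c ^ 2 * e₁ - 3 * a₁ * ω ^ 2
        + 4 * Real.sqrt 3 * c * d₁ * Real.sqrt (c ^ 2 + ω ^ 2))) :
    let f₁ : ℝ → ℝ → ℝ → ℝ := fun r Z W =>
      r * (6 * c ^ 2 * (e₁ - W) - 3 * a₁ * ω ^ 2
        + 4 * Real.sqrt 3 * c * d₁ * Real.sqrt (c ^ 2 + ω ^ 2)) / (6 * ω ^ 3)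
    let f₂ : ℝ → ℝ → ℝ → ℝ := fun r Z W =>
      -(2 * c * Z * (3 * c * (e₁ - W)
        + 2 * Real.sqrt 3 * d₁ * Real.sqrt (c ^ 2 + ω ^ 2))) / (3 * ω ^ 3)
    let f₃ : ℝ → ℝ → ℝ → ℝ := fun r Z W =>
      (12 * c ^ 4 * Z ^ 2 + 2 * c ^ 2 * r ^ 2 * ω ^ 2 - 3 * b₁ * W * ω ^ 4) / (3 * ω ^ 5)
    let Z₀ : ℝ := 0
    let W₀ : ℝ := e₁ + (-3 * a₁ * ω ^ 2
        + 4 * Real.sqrt 3 * c * d₁ * Real.sqrt (c ^ 2 + ω ^ 2)) / (6 * c ^ 2)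
    ∀ r₀ : ℝ,
      (r₀ = Real.sqrt (b₁ * ω ^ 2 * (6 * c ^ 2 * e₁ - 3 * a₁ * ω ^ 2
            + 4 * Real.sqrt 3 * c * d₁ * Real.sqrt (c ^ 2 + ω ^ 2))) / (2 * c ^ 2) ∨
       r₀ = -(Real.sqrt (b₁ * ω ^ 2 * (6 * c ^ 2 * e₁ - 3 * a₁ * ω ^ 2
            + 4 * Real.sqrt 3 * c * d₁ * Real.sqrt (c ^ 2 + ω ^ 2))) / (2 * c ^ 2))) →
      (Matrix.det
          !![deriv (fun r => f₁ r Z₀ W₀) r₀, deriv (fun Z => f₁ r₀ Z W₀) Z₀,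
              deriv (fun W => f₁ r₀ Z₀ W) W₀;
             deriv (fun r => f₂ r Z₀ W₀) r₀, deriv (fun Z => f₂ r₀ Z W₀) Z₀,
              deriv (fun W => f₂ r₀ Z₀ W) W₀;
             deriv (fun r => f₃ r Z₀ W₀) r₀, deriv (fun Z => f₃ r₀ Z W₀) Z₀,
              deriv (fun W => f₃ r₀ Z₀ W) W₀] =
        a₁ * b₁ * (-6 * c ^ 2 * e₁ + 3 * a₁ * ω ^ 2
          - 4 * Real.sqrt 3 * c * d₁ * Real.sqrt (c ^ 2 + ω ^ 2)) / (3 * ω ^ 5)) ∧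
      (a₁ ≠ 0 → b₁ ≠ 0 →
        3 * a₁ * ω ^ 2 ≠ 2 * c * (3 * c * e₁
          + 2 * Real.sqrt 3 * d₁ * Real.sqrt (c ^ 2 + ω ^ 2)) →
        Matrix.det
          !![deriv (fun r => f₁ r Z₀ W₀) r₀, deriv (fun Z => f₁ r₀ Z W₀) Z₀,
              deriv (fun W => f₁ r₀ Z₀ W) W₀;
             deriv (fun r => f₂ r Z₀ W₀) r₀, deriv (fun Z => f₂ r₀ Z W₀) Z₀,
              deriv (fun W => f₂ r₀ Z₀ W) W₀;
             deriv (fun r => f₃ r Z₀ W₀) r₀, deriv (fun Z => f₃ r₀ Z W₀) Z₀,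
              deriv (fun W => f₃ r₀ Z₀ W) W₀] ≠ 0) := by
  intro f₁ f₂ f₃ Z₀ W₀ r₀ hr₀
  have hω' : ω ≠ 0 := hω.ne'
  set Q : ℝ := Real.sqrt 3 with hQ
  set S : ℝ := Real.sqrt (c ^ 2 + ω ^ 2) with hS
  -- square of r₀
  have hr2 : 4 * c ^ 4 * r₀ ^ 2 =
      b₁ * ω ^ 2 * (6 * c ^ 2 * e₁ - 3 * a₁ * ω ^ 2 + 4 * Q * c * d₁ * S) := by
    have h : r₀ ^ 2 = (Real.sqrt (b₁ * ω ^ 2 * (6 * c ^ 2 * e₁ - 3 * a₁ * ω ^ 2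
        + 4 * Q * c * d₁ * S))) ^ 2 / (2 * c ^ 2) ^ 2 := by
      rcases hr₀ with h | h <;> rw [h] <;> ring
    rw [Real.sq_sqrt hrad] at h
    rw [h]
    field_simp
    ring
  -- the nine partial derivatives
  have e11 : deriv (fun r => f₁ r Z₀ W₀) r₀ = 0 := by
    have h : (fun r => f₁ r Z₀ W₀) = fun r : ℝ => r * 0 + 0 := by
      funext r
      simp only [f₁, W₀]
      field_simp
      ring
    rw [h, dlin]
  have e12 : deriv (fun Z => f₁ r₀ Z W₀) Z₀ = 0 := by
    simp only [f₁]
    exact deriv_const _ _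
  have e13 : deriv (fun W => f₁ r₀ Z₀ W) W₀ = -(c ^ 2 * r₀) / ω ^ 3 := by
    have h : (fun W => f₁ r₀ Z₀ W) = fun W : ℝ => W * (-(c ^ 2 * r₀) / ω ^ 3)
        + r₀ * (6 * c ^ 2 * e₁ - 3 * a₁ * ω ^ 2 + 4 * Q * c * d₁ * S) / (6 * ω ^ 3) := by
      funext W
      simp only [f₁]
      field_simp
      ring
    rw [h, dlin]
  have e21 : deriv (fun r => f₂ r Z₀ W₀) r₀ = 0 := by
    simp only [f₂]
    exact deriv_const _ _
  have e22 : deriv (fun Z => f₂ r₀ Z W₀) Z₀ = -a₁ / ω := by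
    have h : (fun Z => f₂ r₀ Z W₀) = fun Z : ℝ => Z * (-a₁ / ω) + 0 := by
      funext Z
      simp only [f₂, W₀]
      field_simp
      ring
    rw [h, dlin]
  have e23 : deriv (fun W => f₂ r₀ Z₀ W) W₀ = 0 := by
    have h : (fun W => f₂ r₀ Z₀ W) = fun W : ℝ => W * 0 + 0 := by
      funext W
      simp only [f₂, Z₀]
      ring
    rw [h, dlin]
  have e31 : deriv (fun r => f₃ r Z₀ W₀) r₀ = 4 * c ^ 2 * r₀ / (3 * ω ^ 3) := by
    have h : (fun r => f₃ r Z₀ W₀) = fun r : ℝ => r ^ 2 * (2 * c ^ 2 / (3 * ω ^ 3))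
        + (12 * c ^ 4 * Z₀ ^ 2 - 3 * b₁ * W₀ * ω ^ 4) / (3 * ω ^ 5) := by
      funext r
      simp only [f₃]
      field_simp
      ring
    rw [h, dsq]
    ring
  have e32 : deriv (fun Z => f₃ r₀ Z W₀) Z₀ = 0 := by
    have h : (fun Z => f₃ r₀ Z W₀) = fun Z : ℝ => Z ^ 2 * (12 * c ^ 4 / (3 * ω ^ 5))
        + (2 * c ^ 2 * r₀ ^ 2 * ω ^ 2 - 3 * b₁ * W₀ * ω ^ 4) / (3 * ω ^ 5) := by
      funext Z
      simp only [f₃]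
      field_simp
      ring
    rw [h, dsq]
    simp [Z₀]
  have e33 : deriv (fun W => f₃ r₀ Z₀ W) W₀ = -b₁ / ω := by
    have h : (fun W => f₃ r₀ Z₀ W) = fun W : ℝ => W * (-b₁ / ω)
        + (12 * c ^ 4 * Z₀ ^ 2 + 2 * c ^ 2 * r₀ ^ 2 * ω ^ 2) / (3 * ω ^ 5) := by
      funext W
      simp only [f₃]
      field_simp
      ring
    rw [h, dlin]
  have hdet : Matrix.det
      !![deriv (fun r => f₁ r Z₀ W₀) r₀, deriv (fun Z => f₁ r₀ Z W₀) Z₀,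
          deriv (fun W => f₁ r₀ Z₀ W) W₀;
         deriv (fun r => f₂ r Z₀ W₀) r₀, deriv (fun Z => f₂ r₀ Z W₀) Z₀,
          deriv (fun W => f₂ r₀ Z₀ W) W₀;
         deriv (fun r => f₃ r Z₀ W₀) r₀, deriv (fun Z => f₃ r₀ Z W₀) Z₀,
          deriv (fun W => f₃ r₀ Z₀ W) W₀] =
      a₁ * b₁ * (-6 * c ^ 2 * e₁ + 3 * a₁ * ω ^ 2 - 4 * Q * c * d₁ * S) / (3 * ω ^ 5) := by
    rw [e11, e12, e13, e21, e22, e23, e31, e32, e33]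
    simp [Matrix.det_fin_three]
    field_simp
    linear_combination (-a₁) * hr2
  refine ⟨hdet, fun ha hb hne => ?_⟩
  rw [hdet]
  apply div_ne_zero
  · apply mul_ne_zero (mul_ne_zero ha hb)
    intro h
    exact hne (by linear_combination h)
  · positivity
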